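/- Let G be a connected simple graph with n vertices v₁,…,vₙ and m edges, in which every vertex has degree at least 1. Let D(G) be the set of 2m arcs (darts) of G, and let U be the 2m×2m Grover matrix indexed by arcs, with U_{ef} = 2/deg(t(f)) if t(f) = o(e) and f ≠ e⁻¹, U_{ef} = 2/deg(t(f)) − 1 if f = e⁻¹, and U_{ef} = 0 otherwise, where o(e), t(e) denote the origin and terminus of an arc e and e⁻¹ its reverse. Let T(G) be the n×n matrix with T_{uv} = 1/deg(u) if u and v are adjacent and 0 otherwise. Then for every complex number λ with λ ≠ 1 and λ ≠ −1, det(λ·I_{2m} − U) = (λ²−1)^(m−n) · det((λ²+1)·I_n − 2λ·T(G)) = (λ²−1)^(m−n) · det((λ²+1)·D − 2λ·A(G)) / (deg v₁ ⋯ deg vₙ), where A(G) is the adjacency matrix of G, D is the diagonal degree matrix, and the exponent m−n is an integer (possibly negative). -/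

import Mathlib

open Matrix Finset

set_option maxHeartbeats 1000000
set_option linter.unusedSectionVars false
set_option linter.unusedTactic false
set_option linter.unnecessarySeqFocus false
section ALL


section Blocks
variable {ι : Type*} [Fintype ι] [DecidableEq ι]

lemma detJ : det (fromBlocks (0:Matrix ι ι ℂ) (1:Matrix ι ι ℂ) (1:Matrix ι ι ℂ) (0:Matrix ι ι ℂ))
    = (-1:ℂ)^(Fintype.card ι) := by
  set J := fromBlocks (0:Matrix ι ι ℂ) (1:Matrix ι ι ℂ) (1:Matrix ι ι ℂ) (0:Matrix ι ι ℂ) with hJ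
  have h1 : J * fromBlocks (1:Matrix ι ι ℂ) (0:Matrix ι ι ℂ) (1:Matrix ι ι ℂ) (1:Matrix ι ι ℂ)
      = fromBlocks 1 1 1 0 := by
    rw [hJ, fromBlocks_multiply]; simp
  have h2 : det J * det (fromBlocks (1:Matrix ι ι ℂ) (0:Matrix ι ι ℂ) (1:Matrix ι ι ℂ) 1)
      = det (fromBlocks (1:Matrix ι ι ℂ) (1:Matrix ι ι ℂ) (1:Matrix ι ι ℂ) 0) := by
    rw [← det_mul, h1]
  rw [det_fromBlocks_one₂₂, det_fromBlocks_one₁₁] at h2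
  simp only [Matrix.mul_zero, sub_zero, det_one, mul_one, Matrix.mul_one, zero_sub] at h2
  rw [h2]
  rw [show (-1 : Matrix ι ι ℂ) = (-1 : ℂ) • 1 by simp, Matrix.det_smul]
  simp

lemma detBlock (lam : ℂ) :
    det (fromBlocks (lam • (1:Matrix ι ι ℂ)) (1:Matrix ι ι ℂ) (1:Matrix ι ι ℂ) (lam • 1))
      = (lam^2-1)^(Fintype.card ι) := by
  set M := fromBlocks (lam • (1:Matrix ι ι ℂ)) (1:Matrix ι ι ℂ) (1:Matrix ι ι ℂ) (lam • (1:Matrix ι ι ℂ)) with hM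
  have h1 : M * fromBlocks (1:Matrix ι ι ℂ) (0:Matrix ι ι ℂ) (-(lam • 1)) (1:Matrix ι ι ℂ)
      = fromBlocks 0 1 ((1-lam^2) • 1) (lam • 1) := by
    rw [hM, fromBlocks_multiply]
    congr 1 <;> simp [smul_smul, sub_smul, sq, sub_eq_add_neg, add_smul, neg_smul]
  have h2 : det (fromBlocks (0:Matrix ι ι ℂ) (1:Matrix ι ι ℂ) (1:Matrix ι ι ℂ) (0:Matrix ι ι ℂ)) *
      (det M * det (fromBlocks (1:Matrix ι ι ℂ) (0:Matrix ι ι ℂ) (-(lam • 1)) (1:Matrix ι ι ℂ)))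
      = det (fromBlocks ((1-lam^2) • (1:Matrix ι ι ℂ)) (lam • 1) (0:Matrix ι ι ℂ) (1:Matrix ι ι ℂ)) := by
    rw [← det_mul, ← det_mul, h1, fromBlocks_multiply]
    simp
  rw [detJ, det_fromBlocks_one₂₂, det_fromBlocks_one₂₂] at h2
  simp only [Matrix.zero_mul, Matrix.mul_zero, sub_zero, det_one, mul_one, Matrix.det_smul,
    det_one] at h2
  have hneg : ((-1:ℂ))^(Fintype.card ι) * ((-1:ℂ))^(Fintype.card ι) = 1 := by
    rw [← pow_add, ← two_mul, pow_mul]; simp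
  calc det M = ((-1:ℂ))^(Fintype.card ι) * (((-1:ℂ))^(Fintype.card ι) * det M) := by
        rw [← mul_assoc, hneg, one_mul]
    _ = ((-1:ℂ))^(Fintype.card ι) * (1-lam^2)^(Fintype.card ι) := by rw [h2]
    _ = (lam^2-1)^(Fintype.card ι) := by rw [← mul_pow]; ring_nf
end Blocks

namespace KS
variable {V : Type*} [Fintype V] [DecidableEq V] [LinearOrder V]
  (G : SimpleGraph V) [DecidableRel G.Adj]

noncomputable def S : Matrix G.Dart G.Dart ℂ := Matrix.of fun e f => if f = e.symm then 1 else 0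
noncomputable def Bt : Matrix V G.Dart ℂ := Matrix.of fun v e => if e.snd = v then 1 else 0
noncomputable def Ao : Matrix G.Dart V ℂ := Matrix.of fun e v => if e.fst = v then 1 else 0
noncomputable def C : Matrix V V ℂ := Matrix.diagonal fun v => 2 / (G.degree v : ℂ)

lemma S_mul_S : S G * S G = 1 := by
  ext e g
  simp only [S, mul_apply, of_apply, ite_mul, one_mul, zero_mul]
  rw [Finset.sum_ite_eq' univ e.symm (fun f => if g = f.symm then 1 else 0)]
  simp [Matrix.one_apply, eq_comm]

lemma Bt_mul_Ao : Bt G * Ao G = G.adjMatrix ℂ := by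
  ext u v
  simp only [Bt, Ao, mul_apply, of_apply, ite_mul, one_mul, zero_mul, SimpleGraph.adjMatrix_apply]
  by_cases hadj : G.Adj v u
  · have key : ∀ x : G.Dart, (if x.toProd.2 = u then if x.toProd.1 = v then (1:ℂ) else 0 else 0)
        = if x = (⟨(v,u), hadj⟩ : G.Dart) then 1 else 0 := by
      intro x
      by_cases h : x = (⟨(v,u), hadj⟩ : G.Dart)
      · subst h; simp
      · rw [if_neg h]
        by_cases h2 : x.toProd.2 = u
        · rw [if_pos h2, if_neg]
          intro h1
          exact h (SimpleGraph.Dart.ext _ _ (Prod.ext h1 h2))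
        · rw [if_neg h2]
    rw [Finset.sum_congr rfl fun x _ => key x, Finset.sum_ite_eq' univ _ (fun _ => (1:ℂ))]
    simp [hadj.symm]
  · rw [if_neg (fun h => hadj h.symm)]
    apply Finset.sum_eq_zero
    intro x _
    by_cases h2 : x.toProd.2 = u
    · rw [if_pos h2, if_neg]
      intro h1
      exact hadj (h1 ▸ h2 ▸ x.adj)
    · rw [if_neg h2]

lemma Bt_mul_S : Bt G * S G = Matrix.of fun v e => if e.fst = v then 1 else 0 := by
  ext u f
  simp only [Bt, S, mul_apply, of_apply, mul_ite, mul_one, mul_zero]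
  have key : ∀ x : G.Dart, (if f = x.symm then if x.toProd.2 = u then (1:ℂ) else 0 else 0)
      = if x = f.symm then if x.toProd.2 = u then (1:ℂ) else 0 else 0 := by
    intro x
    congr 1
    simp only [eq_iff_iff]
    constructor
    · intro h; rw [h, SimpleGraph.Dart.symm_symm]
    · intro h; rw [h, SimpleGraph.Dart.symm_symm]
  rw [Finset.sum_congr rfl fun x _ => key x,
    Finset.sum_ite_eq' univ f.symm (fun e => if e.snd = u then (1:ℂ) else 0)]
  simp

lemma BtS_mul_Ao : (Bt G * S G) * Ao G = Matrix.diagonal fun v => (G.degree v : ℂ) := by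
  rw [Bt_mul_S]
  ext u v
  simp only [mul_apply, of_apply, Ao, ite_mul, one_mul, zero_mul, Matrix.diagonal_apply]
  by_cases huv : u = v
  · subst huv
    rw [if_pos rfl]
    have : ∀ x : G.Dart, (if x.toProd.1 = u then if x.toProd.1 = u then (1:ℂ) else 0 else 0)
        = if x.toProd.1 = u then (1:ℂ) else 0 := by intro x; by_cases h : x.toProd.1 = u <;> simp [h]
    rw [Finset.sum_congr rfl fun x _ => this x, Finset.sum_boole]
    norm_cast
    exact SimpleGraph.dart_fst_fiber_card_eq_degree G u
  · rw [if_neg huv]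
    apply Finset.sum_eq_zero
    intro x _
    by_cases h1 : x.toProd.1 = u
    · rw [if_pos h1, if_neg (fun h2 => huv (h1.symm.trans h2))]
    · rw [if_neg h1]


/-- positively oriented darts -/
def PD := {d : G.Dart // d.fst < d.snd}

instance : Fintype (PD G) := by unfold PD; infer_instance
instance : DecidableEq (PD G) := by unfold PD; infer_instance

def dartEquiv : G.Dart ≃ (PD G ⊕ PD G) where
  toFun d := if h : d.fst < d.snd then .inl ⟨d, h⟩ else
    .inr ⟨d.symm, lt_of_le_of_ne (not_lt.mp h) d.snd_ne_fst⟩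
  invFun := Sum.elim (fun p => p.1) (fun p => p.1.symm)
  left_inv d := by
    by_cases h : d.fst < d.snd
    · simp [h]; rfl
    · simp [h]; exact d.symm_symm
  right_inv p := by
    cases p with
    | inl p => simp [p.2]; rfl
    | inr p =>
      have : ¬ (p.1.symm.fst < p.1.symm.snd) := not_lt.mpr (le_of_lt p.2)
      simp [this]
      exact dif_neg (not_lt.mpr p.2.le)

lemma card_PD (m : ℕ) (hm : G.edgeFinset.card = m) : Fintype.card (PD G) = m := by
  have h1 : Fintype.card G.Dart = 2 * m := by
    rw [SimpleGraph.dart_card_eq_twice_card_edges, hm]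
  have h2 : Fintype.card G.Dart = 2 * Fintype.card (PD G) := by
    rw [Fintype.card_congr (dartEquiv G), Fintype.card_sum, two_mul]
  omega

lemma detX (lam : ℂ) (m : ℕ) (hm : G.edgeFinset.card = m) :
    det (lam • (1 : Matrix G.Dart G.Dart ℂ) + S G) = (lam^2 - 1)^m := by
  have hre : det (lam • (1 : Matrix G.Dart G.Dart ℂ) + S G)
      = det ((lam • (1 : Matrix G.Dart G.Dart ℂ) + S G).submatrix
          (dartEquiv G).symm (dartEquiv G).symm) := by
    rw [Matrix.det_submatrix_equiv_self]
  have hblock : (lam • (1 : Matrix G.Dart G.Dart ℂ) + S G).submatrix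
          (dartEquiv G).symm (dartEquiv G).symm
      = fromBlocks (lam • (1:Matrix (PD G) (PD G) ℂ)) 1 1 (lam • 1) := by
    ext x y
    have hsymm_inj : Function.Injective (SimpleGraph.Dart.symm : G.Dart → G.Dart) :=
      (SimpleGraph.Dart.symm_involutive).injective
    cases x with
    | inl p =>
      cases y with
      | inl q =>
        have h2 : (q.1 : G.Dart) ≠ p.1.symm := by
          intro h
          have := q.2
          rw [h] at this
          exact absurd p.2 (not_lt.mpr (le_of_lt this))
        simp only [submatrix_apply, Matrix.add_apply, Matrix.smul_apply, Matrix.one_apply, S,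
          of_apply, fromBlocks_apply₁₁, dartEquiv, Equiv.coe_fn_symm_mk, Sum.elim_inl]
        rw [if_neg h2]
        have : (p.1 : G.Dart) = q.1 ↔ p = q := by
          constructor
          · intro h; exact Subtype.ext h
          · intro h; rw [h]
        rw [add_zero]
        by_cases h : p = q
        · rw [if_pos (this.mpr h), if_pos h]
        · rw [if_neg (fun hh => h (this.mp hh)), if_neg h]
      | inr q =>
        have h1 : (p.1 : G.Dart) ≠ q.1.symm := by
          intro h
          have hp := p.2
          rw [h] at hp
          exact absurd q.2 (not_lt.mpr hp.le)
        have h2 : q.1.symm = p.1.symm ↔ p = q := by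
          constructor
          · intro h; exact Subtype.ext (hsymm_inj h).symm
          · intro h; rw [h]
        simp only [submatrix_apply, Matrix.add_apply, Matrix.smul_apply, Matrix.one_apply, S,
          of_apply, fromBlocks_apply₁₂, dartEquiv, Equiv.coe_fn_symm_mk, Sum.elim_inl,
          Sum.elim_inr]
        rw [if_neg h1, if_congr h2 rfl rfl]
        simp [Matrix.one_apply]
    | inr p =>
      cases y with
      | inl q =>
        have h1 : p.1.symm ≠ (q.1 : G.Dart) := by
          intro h
          have hq := q.2
          rw [← h] at hq
          exact absurd p.2 (not_lt.mpr hq.le)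
        have h2 : (q.1 : G.Dart) = p.1.symm.symm ↔ p = q := by
          rw [SimpleGraph.Dart.symm_symm]
          constructor
          · intro h; exact Subtype.ext h.symm
          · intro h; rw [h]
        simp only [submatrix_apply, Matrix.add_apply, Matrix.smul_apply, Matrix.one_apply, S,
          of_apply, fromBlocks_apply₂₁, dartEquiv, Equiv.coe_fn_symm_mk, Sum.elim_inl,
          Sum.elim_inr]
        rw [if_neg h1, if_congr h2 rfl rfl]
        simp [Matrix.one_apply]
      | inr q =>
        have h1 : (q.1.symm : G.Dart) ≠ p.1.symm.symm := by
          rw [SimpleGraph.Dart.symm_symm]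
          intro h
          have hp := p.2
          rw [← h] at hp
          exact absurd q.2 (not_lt.mpr hp.le)
        have h2 : p.1.symm = q.1.symm ↔ p = q := by
          constructor
          · intro h; exact Subtype.ext (hsymm_inj h)
          · intro h; rw [h]
        simp only [submatrix_apply, Matrix.add_apply, Matrix.smul_apply, Matrix.one_apply, S,
          of_apply, fromBlocks_apply₂₂, dartEquiv, Equiv.coe_fn_symm_mk, Sum.elim_inr]
        rw [if_neg h1, if_congr h2 rfl rfl, add_zero]
  rw [hre, hblock, detBlock, card_PD G m hm]

lemma U_decomp :
    (Matrix.of fun e f => if f.snd = e.fst then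
        (if f = e.symm then 2 / (G.degree f.snd : ℂ) - 1 else 2 / (G.degree f.snd : ℂ))
      else 0 : Matrix G.Dart G.Dart ℂ)
    = Ao G * C G * Bt G - S G := by
  have hACB : ∀ e f : G.Dart, (Ao G * C G * Bt G) e f
      = if f.snd = e.fst then 2 / (G.degree e.fst : ℂ) else 0 := by
    intro e f
    rw [Matrix.mul_assoc, Matrix.mul_apply]
    simp only [Ao, of_apply, C, Bt, Matrix.diagonal_mul, ite_mul, one_mul, zero_mul]
    rw [Finset.sum_ite_eq univ e.fst
      (fun v => 2 / (G.degree v : ℂ) * (if f.snd = v then 1 else 0))]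
    simp only [mem_univ, if_true, mul_ite, mul_one, mul_zero]
  ext e f
  rw [Matrix.sub_apply, hACB]
  simp only [S, of_apply]
  by_cases hfe : f.snd = e.fst
  · rw [if_pos hfe, if_pos hfe, hfe]
    by_cases hsym : f = e.symm
    · rw [if_pos hsym, if_pos hsym]
    · rw [if_neg hsym, if_neg hsym]; ring
  · have hns : f ≠ e.symm := fun h => hfe (by rw [h]; rfl)
    rw [if_neg hfe, if_neg hfe, if_neg hns]; ring

end KS
end ALL

/-- Konno–Sato theorem (Theorem 2.1): the characteristic polynomial of the Grover matrix
`U` of a connected graph `G` with `n` vertices and `m` edges: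
`det(λ I₂ₘ - U) = (λ²-1)^(m-n) det((λ²+1) Iₙ - 2λ T(G))
               = (λ²-1)^(m-n) det((λ²+1) D - 2λ A(G)) / (d₁ ⋯ dₙ)`,
where `T(G)` is the random-walk transition matrix, `A(G)` the adjacency matrix and `D`
the diagonal degree matrix. Darts (oriented edges) index the Grover matrix. -/
theorem konno_sato_grover_char_poly
    (n m : ℕ) (G : SimpleGraph (Fin n)) [DecidableRel G.Adj]
    (hconn : G.Connected) (hdeg : ∀ v, 1 ≤ G.degree v)
    (hm : G.edgeFinset.card = m)
    (U : Matrix G.Dart G.Dart ℂ)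
    (hU : U = Matrix.of fun e f =>
      if f.snd = e.fst then
        (if f = e.symm then 2 / (G.degree f.snd : ℂ) - 1 else 2 / (G.degree f.snd : ℂ))
      else 0)
    (T : Matrix (Fin n) (Fin n) ℂ)
    (hT : T = Matrix.of fun u v => if G.Adj u v then 1 / (G.degree u : ℂ) else 0)
    (lam : ℂ) (h1 : lam ≠ 1) (h2 : lam ≠ -1) :
    det (lam • (1 : Matrix G.Dart G.Dart ℂ) - U)
        = (lam ^ 2 - 1) ^ ((m : ℤ) - (n : ℤ)) *
            det ((lam ^ 2 + 1) • (1 : Matrix (Fin n) (Fin n) ℂ) - (2 * lam) • T) ∧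
      det (lam • (1 : Matrix G.Dart G.Dart ℂ) - U)
        = (lam ^ 2 - 1) ^ ((m : ℤ) - (n : ℤ)) *
            det ((lam ^ 2 + 1) • Matrix.diagonal (fun v => (G.degree v : ℂ)) -
              (2 * lam) • (G.adjMatrix ℂ)) /
            ∏ v : Fin n, (G.degree v : ℂ) := by
  classical
  have hdeg0 : ∀ v : Fin n, (G.degree v : ℂ) ≠ 0 := fun v =>
    Nat.cast_ne_zero.mpr (Nat.one_le_iff_ne_zero.mp (hdeg v))
  have hl : lam ^ 2 - 1 ≠ 0 := by
    intro h
    rcases mul_eq_zero.mp (show (lam - 1) * (lam + 1) = 0 by linear_combination h) with h' | h'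
    · exact h1 (sub_eq_zero.mp h')
    · exact h2 (eq_neg_of_add_eq_zero_left h')
  set X : Matrix G.Dart G.Dart ℂ := lam • 1 + KS.S G with hX
  set Y : Matrix G.Dart G.Dart ℂ := (lam ^ 2 - 1)⁻¹ • (lam • 1 - KS.S G) with hY
  have hXY : X * Y = 1 := by
    have hmul : X * (lam • 1 - KS.S G) = (lam ^ 2 - 1) • 1 := by
      rw [hX, add_mul, mul_sub, mul_sub, KS.S_mul_S]
      simp only [Matrix.smul_mul, Matrix.mul_smul, Matrix.one_mul, Matrix.mul_one, smul_smul]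
      rw [sub_smul, one_smul, sq]
      abel
    rw [hY, Matrix.mul_smul, hmul, smul_smul, inv_mul_cancel₀ hl, one_smul]
  have hU' : U = KS.Ao G * KS.C G * KS.Bt G - KS.S G := by rw [hU, KS.U_decomp]
  have hsplit : lam • (1 : Matrix G.Dart G.Dart ℂ) - U
      = X - KS.Ao G * KS.C G * KS.Bt G := by
    rw [hU', hX]; abel
  have hfact : X - KS.Ao G * KS.C G * KS.Bt G
      = X * (1 - Y * (KS.Ao G * KS.C G * KS.Bt G)) := by
    rw [mul_sub, mul_one, ← mul_assoc, hXY, one_mul]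
  have hdetX : det X = (lam ^ 2 - 1) ^ m := KS.detX G lam m hm
  have hWA : det (1 - Y * (KS.Ao G * KS.C G * KS.Bt G))
      = det (1 - (KS.C G * KS.Bt G) * (Y * KS.Ao G)) := by
    rw [show Y * (KS.Ao G * KS.C G * KS.Bt G) = (Y * KS.Ao G) * (KS.C G * KS.Bt G) by
      rw [← Matrix.mul_assoc, ← Matrix.mul_assoc, Matrix.mul_assoc (Y * KS.Ao G)]]
    exact Matrix.det_one_sub_mul_comm _ _
  have hBtY : KS.Bt G * Y = (lam ^ 2 - 1)⁻¹ • (lam • KS.Bt G - KS.Bt G * KS.S G) := by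
    rw [hY, Matrix.mul_smul]
    congr 1
    rw [Matrix.mul_sub, Matrix.mul_smul, Matrix.mul_one]
  have hCadj : KS.C G * (G.adjMatrix ℂ) = (2 : ℂ) • T := by
    rw [hT]; ext u v
    simp only [KS.C, Matrix.diagonal_mul, SimpleGraph.adjMatrix_apply, Matrix.smul_apply, of_apply,
      smul_eq_mul]
    by_cases h : G.Adj u v <;> simp [h] <;> ring
  have hCD : KS.C G * Matrix.diagonal (fun v => (G.degree v : ℂ))
      = (2 : ℂ) • (1 : Matrix (Fin n) (Fin n) ℂ) := by
    rw [KS.C, Matrix.diagonal_mul_diagonal, Matrix.smul_one_eq_diagonal,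
      Matrix.diagonal_eq_diagonal_iff]
    intro v
    exact div_mul_cancel₀ _ (hdeg0 v)
  have hCBYA : (KS.C G * KS.Bt G) * (Y * KS.Ao G)
      = (lam ^ 2 - 1)⁻¹ • ((2 * lam) • T - (2 : ℂ) • 1) := by
    have e1 : (KS.C G * KS.Bt G) * (Y * KS.Ao G) = KS.C G * ((KS.Bt G * Y) * KS.Ao G) := by
      rw [Matrix.mul_assoc, ← Matrix.mul_assoc (KS.Bt G)]
    rw [e1, hBtY, Matrix.smul_mul, Matrix.mul_smul, Matrix.sub_mul, Matrix.smul_mul,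
      KS.Bt_mul_Ao, KS.BtS_mul_Ao, mul_sub, Matrix.mul_smul, hCadj, hCD]
    congr 1
    rw [smul_smul, mul_comm lam 2]
  have hone_sub : (1 : Matrix (Fin n) (Fin n) ℂ) - (KS.C G * KS.Bt G) * (Y * KS.Ao G)
      = (lam ^ 2 - 1)⁻¹ • ((lam ^ 2 + 1) • 1 - (2 * lam) • T) := by
    rw [hCBYA]
    match_scalars
    · field_simp
      ring
    · field_simp
  have hdetone : det (1 - (KS.C G * KS.Bt G) * (Y * KS.Ao G))
      = ((lam ^ 2 - 1)⁻¹) ^ n * det ((lam ^ 2 + 1) • 1 - (2 * lam) • T) := by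
    rw [hone_sub, Matrix.det_smul, Fintype.card_fin]
  have main1 : det (lam • (1 : Matrix G.Dart G.Dart ℂ) - U)
      = (lam ^ 2 - 1) ^ ((m : ℤ) - (n : ℤ)) *
          det ((lam ^ 2 + 1) • (1 : Matrix (Fin n) (Fin n) ℂ) - (2 * lam) • T) := by
    rw [hsplit, hfact, det_mul, hdetX, hWA, hdetone, ← mul_assoc]
    congr 1
    rw [zpow_sub₀ hl, zpow_natCast, zpow_natCast, div_eq_mul_inv, inv_pow]
  have hDT : Matrix.diagonal (fun v => (G.degree v : ℂ)) * T = G.adjMatrix ℂ := by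
    rw [hT]; ext u v
    simp only [Matrix.diagonal_mul, of_apply, SimpleGraph.adjMatrix_apply]
    by_cases h : G.Adj u v
    · rw [if_pos h, if_pos h, mul_one_div, div_self (hdeg0 u)]
    · rw [if_neg h, if_neg h, mul_zero]
  have hfac2 : (lam ^ 2 + 1) • Matrix.diagonal (fun v => (G.degree v : ℂ)) -
        (2 * lam) • (G.adjMatrix ℂ)
      = Matrix.diagonal (fun v => (G.degree v : ℂ)) * ((lam ^ 2 + 1) • 1 - (2 * lam) • T) := by
    rw [mul_sub, Matrix.mul_smul, Matrix.mul_smul, Matrix.mul_one, hDT]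
  have hprod : (∏ v : Fin n, (G.degree v : ℂ)) ≠ 0 :=
    Finset.prod_ne_zero_iff.mpr (fun v _ => hdeg0 v)
  have hdet2 : det ((lam ^ 2 + 1) • (1 : Matrix (Fin n) (Fin n) ℂ) - (2 * lam) • T)
      = det ((lam ^ 2 + 1) • Matrix.diagonal (fun v => (G.degree v : ℂ)) -
          (2 * lam) • (G.adjMatrix ℂ)) / ∏ v : Fin n, (G.degree v : ℂ) := by
    rw [hfac2, det_mul, det_diagonal]
    field_simp
  exact ⟨main1, by rw [main1, hdet2]; ring⟩
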